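/- Monotonicity of date-period addition is not strict: there exist valid dates D1 and D2 and a period P with D1 < D2 but (D1 +P P) = (D2 +P P). In particular, for D1 = (2020, 1, 30), D2 = (2020, 1, 31), and P = (0, 1, 0), we have D1 < D2 and D1 +P P = D2 +P P = (2020, 2, 29). -/
import Mathlib


/-- A date is a triple of integers (year, month, day). -/
structure Date where
  y : ℤ
  m : ℤ
  d : ℤ

/-- A year is a leap year iff divisible by 4 and (not by 100, or by 400). -/
def isLeap (y : ℤ) : Prop :=
  y % 4 = 0 ∧ (y % 100 ≠ 0 ∨ y % 400 = 0)

/-- Number of days in month `m` of year `y`. -/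
def nbdays (y m : ℤ) : ℤ :=
  if m = 4 ∨ m = 6 ∨ m = 9 ∨ m = 11 then 30
  else if m = 2 then
    (if y % 4 = 0 ∧ (y % 100 ≠ 0 ∨ y % 400 = 0) then 29 else 28)
  else 31

/-- A date is valid iff `1 ≤ m ≤ 12` and `1 ≤ d ≤ nbdays y m`. -/
def Date.valid (D : Date) : Prop :=
  1 ≤ D.m ∧ D.m ≤ 12 ∧ 1 ≤ D.d ∧ D.d ≤ nbdays D.y D.m

/-- Month addition `(y, m, d) +m n`, with round-down of the day component. -/
def addMonths (D : Date) (n : ℤ) : Date :=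
  ⟨D.y + (D.m - 1 + n) / 12,
   1 + (D.m - 1 + n) % 12,
   min D.d (nbdays (D.y + (D.m - 1 + n) / 12) (1 + (D.m - 1 + n) % 12))⟩

/-- A configuration of the small-step day-addition machine:
either a pending addition `D +D n`, or a finished date. -/
inductive Conf where
  | pending (D : Date) (n : ℤ)
  | done (D : Date)

/-- Small-step rules for day addition `+D`. -/
inductive Step : Conf → Conf → Prop where
  | add_days {y m d n : ℤ}
      (h1 : 1 ≤ d + n) (h2 : d + n ≤ nbdays y m) :
      Step (Conf.pending ⟨y, m, d⟩ n) (Conf.done ⟨y, m, d + n⟩)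
  | add_days_over {y m d n : ℤ}
      (h : d + n > nbdays y m) :
      Step (Conf.pending ⟨y, m, d⟩ n)
        (Conf.pending (addMonths ⟨y, m, 1⟩ 1) (n - (nbdays y m - d) - 1))
  | add_days_under1 {y m d n : ℤ}
      (h1 : 1 < d) (h2 : d + n ≤ 0) :
      Step (Conf.pending ⟨y, m, d⟩ n) (Conf.pending ⟨y, m, 1⟩ (d - 1 + n))
  | add_days_under2 {y m n y' m' : ℤ}
      (h1 : 1 + n ≤ 0) (h2 : addMonths ⟨y, m, 1⟩ (-1) = ⟨y', m', 1⟩) :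
      Step (Conf.pending ⟨y, m, 1⟩ n) (Conf.pending ⟨y', m', 1⟩ (n + nbdays y' m'))

/-- Reduction in finitely many steps. -/
def Reduces : Conf → Conf → Prop := Relation.ReflTransGen Step

instance : Nonempty Date := ⟨⟨2000, 3, 1⟩⟩

/-- `addDays D n` is the unique valid normal form of `D +D n`
(when it exists; arbitrary otherwise). -/
noncomputable def addDays (D : Date) (n : ℤ) : Date :=
  Classical.epsilon fun D' : Date =>
    D'.valid ∧ Reduces (Conf.pending D n) (Conf.done D')

/-- Date-period addition `D +P (ny, nm, nd) = (D +m (12·ny + nm)) +D nd`. -/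
noncomputable def addPeriod (D : Date) (P : ℤ × ℤ × ℤ) : Date :=
  addDays (addMonths D (12 * P.1 + P.2.1)) P.2.2

/-- Lexicographic order on dates. -/
def Date.le (a b : Date) : Prop :=
  a.y < b.y ∨ (a.y = b.y ∧ a.m < b.m) ∨ (a.y = b.y ∧ a.m = b.m ∧ a.d ≤ b.d)

/-- Strict lexicographic order on dates. -/
def Date.lt (a b : Date) : Prop :=
  a.y < b.y ∨ (a.y = b.y ∧ a.m < b.m) ∨ (a.y = b.y ∧ a.m = b.m ∧ a.d < b.d)

/-- The epoch date: March 1, 2000. -/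
def epoch : Date := ⟨2000, 3, 1⟩

/-- `toDelta D` is the unique integer `n` with `epoch +D n = D`
(when it exists; arbitrary otherwise). -/
noncomputable def toDelta (D : Date) : ℤ :=
  Classical.epsilon fun n : ℤ => addDays epoch n = D

lemma nb29 : nbdays 2020 2 = 29 := by norm_num [nbdays]

lemma step29 : Step (Conf.pending ⟨2020, 2, 29⟩ 0) (Conf.done ⟨2020, 2, 29⟩) := by
  have h : (29 : ℤ) = 29 + 0 := by ring
  rw [show (Conf.done ⟨2020, 2, 29⟩ : Conf) = Conf.done ⟨2020, 2, 29 + 0⟩ by norm_num]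
  exact Step.add_days (by norm_num) (by rw [nb29]; norm_num)

lemma done_no_step {D : Date} {c : Conf} (h : Step (Conf.done D) c) : False := by
  cases h

lemma uniq29 (D' : Date) (h : Reduces (Conf.pending ⟨2020, 2, 29⟩ 0) (Conf.done D')) :
    D' = ⟨2020, 2, 29⟩ := by
  rcases (Relation.ReflTransGen.cases_head h) with heq | ⟨c, hstep, hrest⟩
  · exact absurd heq (by simp)
  · have hc : c = Conf.done ⟨2020, 2, 29⟩ := by
      cases hstep with
      | add_days h1 h2 => norm_num
      | add_days_over h => rw [nb29] at h; omega
      | add_days_under1 h1 h2 => omega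
    subst hc
    rcases (Relation.ReflTransGen.cases_head hrest) with heq | ⟨c2, hstep2, _⟩
    · cases heq; rfl
    · exact absurd hstep2 done_no_step

lemma addDays29 : addDays ⟨2020, 2, 29⟩ 0 = ⟨2020, 2, 29⟩ := by
  have hex : ∃ D' : Date, D'.valid ∧ Reduces (Conf.pending ⟨2020, 2, 29⟩ 0) (Conf.done D') :=
    ⟨⟨2020, 2, 29⟩, ⟨by norm_num, by norm_num, by norm_num, by rw [nb29]⟩,
      Relation.ReflTransGen.single step29⟩
  have hs := Classical.epsilon_spec hex
  exact uniq29 _ hs.2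

lemma am30 : addMonths ⟨2020, 1, 30⟩ (12 * 0 + 1) = ⟨2020, 2, 29⟩ := by
  simp [addMonths, nbdays]
lemma am31 : addMonths ⟨2020, 1, 31⟩ (12 * 0 + 1) = ⟨2020, 2, 29⟩ := by
  simp [addMonths, nbdays]

/-- **Monotonicity of date-period addition is not strict**: there exist valid dates
`D1 < D2` and a period `P` with `D1 +P P = D2 +P P`; in particular for
`D1 = (2020, 1, 30)`, `D2 = (2020, 1, 31)`, `P = (0, 1, 0)`, both sums equal
`(2020, 2, 29)`. -/
theorem addPeriod_not_strict_mono :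
    (∃ (D1 D2 : Date) (P : ℤ × ℤ × ℤ), D1.valid ∧ D2.valid ∧ Date.lt D1 D2 ∧
      addPeriod D1 P = addPeriod D2 P) ∧
    Date.lt ⟨2020, 1, 30⟩ ⟨2020, 1, 31⟩ ∧
    addPeriod ⟨2020, 1, 30⟩ (0, 1, 0) = ⟨2020, 2, 29⟩ ∧
    addPeriod ⟨2020, 1, 31⟩ (0, 1, 0) = ⟨2020, 2, 29⟩ := by
  have h30 : addPeriod ⟨2020, 1, 30⟩ (0, 1, 0) = ⟨2020, 2, 29⟩ := by
    unfold addPeriod; rw [show ((0,1,0) : ℤ×ℤ×ℤ).1 = 0 from rfl]; rw [am30]; exact addDays29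
  have h31 : addPeriod ⟨2020, 1, 31⟩ (0, 1, 0) = ⟨2020, 2, 29⟩ := by
    unfold addPeriod; rw [am31]; exact addDays29
  refine ⟨⟨⟨2020, 1, 30⟩, ⟨2020, 1, 31⟩, (0, 1, 0), ?_, ?_, ?_, h30.trans h31.symm⟩, ?_, h30, h31⟩
  · exact ⟨by norm_num, by norm_num, by norm_num, by norm_num [nbdays]⟩
  · exact ⟨by norm_num, by norm_num, by norm_num, by norm_num [nbdays]⟩
  · right; right; norm_num
  · right; right; norm_num
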